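/- Let W ∈ Gr₂(n,k) and x, z ∈ 𝔽₂ⁿ. Then H^{⊗n} |W_{x,z}⟩ = (−1)^{x·z} |W^⊥_{z,x}⟩, where H^{⊗n} is the n-fold tensor power of the Hadamard operator H = (1/√2)·[[1,1],[1,−1]] acting on (ℂ²)^{⊗n}. -/

import Mathlib

noncomputable def chi (a : ZMod 2) : ℂ := (-1 : ℂ) ^ a.val

lemma chi_zero : chi 0 = 1 := rfl

lemma chi_add (a b : ZMod 2) : chi (a + b) = chi a * chi b := by
  simp only [chi]
  rw [← pow_add, ZMod.val_add, ← neg_one_pow_eq_pow_mod_two]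

lemma chi_sq (a : ZMod 2) : chi a * chi a = 1 := by
  simp only [chi]
  rw [← pow_add, ← two_mul, pow_mul]
  norm_num

lemma chi_sum {ι : Type*} (s : Finset ι) (f : ι → ZMod 2) :
    chi (∑ i ∈ s, f i) = ∏ i ∈ s, chi (f i) := by
  induction s using Finset.cons_induction with
  | empty => simp [chi_zero]
  | cons a s ha ih => simp [Finset.sum_cons, Finset.prod_cons, chi_add, ih]

section
variable {n : ℕ}

noncomputable def B (n : ℕ) : LinearMap.BilinForm (ZMod 2) (Fin n → ZMod 2) :=
  Matrix.toBilin' 1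

lemma B_apply (v w : Fin n → ZMod 2) : B n v w = dotProduct v w := by
  rw [B, Matrix.toBilin'_apply', Matrix.one_mulVec]

lemma B_nondeg : (B n).Nondegenerate := by
  constructor
  · intro v hv
    funext i
    have := hv (Pi.single i 1)
    rw [B_apply] at this
    simpa [dotProduct_single] using this
  · intro v hv
    funext i
    have := hv (Pi.single i 1)
    rw [B_apply] at this
    simpa [single_dotProduct] using this

lemma B_refl : (B n).IsRefl := by
  intro v w h
  rw [B_apply] at h ⊢
  rwa [dotProduct_comm]
end


open scoped Classical in
/-- The coset state `|W_{x,z}⟩ = 2^{-k/2} ∑_{u ∈ W} (-1)^{z·u} |x+u⟩` in `(ℂ²)^{⊗n}`,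
identified with `EuclideanSpace ℂ (Fin n → ZMod 2)` via the computational basis. -/
noncomputable def cosetState {n : ℕ} (W : Submodule (ZMod 2) (Fin n → ZMod 2))
    (x z : Fin n → ZMod 2) : EuclideanSpace ℂ (Fin n → ZMod 2) :=
  (((Real.sqrt 2 : ℝ) : ℂ) ^ (Module.finrank (ZMod 2) W))⁻¹ •
    ∑ u : W, ((-1 : ℂ) ^ (dotProduct z (u : Fin n → ZMod 2)).val) •
      EuclideanSpace.single (x + (u : Fin n → ZMod 2)) (1 : ℂ)

/-- The dual space `W^⊥ = {y ∈ 𝔽₂ⁿ : x·y = 0 for all x ∈ W}` with respect to the standard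
bilinear form `x·y = ∑ᵢ xᵢyᵢ`. -/
def dualSpace {n : ℕ} (W : Submodule (ZMod 2) (Fin n → ZMod 2)) :
    Submodule (ZMod 2) (Fin n → ZMod 2) where
  carrier := {y | ∀ x ∈ W, dotProduct x y = 0}
  add_mem' := by
    intro a b ha hb x hx
    simp [dotProduct_add, ha x hx, hb x hx]
  zero_mem' := by
    intro x hx
    simp
  smul_mem' := by
    intro c a ha x hx
    simp [dotProduct_smul, ha x hx]


section
open scoped Classical
variable {n : ℕ} (W : Submodule (ZMod 2) (Fin n → ZMod 2))

lemma chi_of_ne {a : ZMod 2} (h : a ≠ 0) : chi a = -1 := by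
  have hlt : a.val < 2 := a.val_lt
  have h0 : a.val ≠ 0 := fun hh => h ((ZMod.val_eq_zero a).mp hh)
  have h1 : a.val = 1 := by omega
  rw [chi, h1, pow_one]

lemma mem_dualSpace {y : Fin n → ZMod 2} :
    y ∈ dualSpace W ↔ ∀ x ∈ W, dotProduct x y = 0 := Iff.rfl

lemma dualSpace_eq : dualSpace W = (B n).orthogonal W := by
  ext y
  simp [mem_dualSpace, LinearMap.BilinForm.mem_orthogonal_iff,
    LinearMap.BilinForm.IsOrtho, B_apply]

lemma finrank_dualSpace :
    Module.finrank (ZMod 2) (dualSpace W) = n - Module.finrank (ZMod 2) W := by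
  rw [dualSpace_eq, LinearMap.BilinForm.finrank_orthogonal B_nondeg,
    Module.finrank_pi, Fintype.card_fin]

lemma finrank_le_n : Module.finrank (ZMod 2) W ≤ n := by
  have := Submodule.finrank_le W
  rwa [Module.finrank_pi, Fintype.card_fin] at this

lemma card_submodule : (Fintype.card W : ℂ) = 2 ^ Module.finrank (ZMod 2) W := by
  rw [Module.card_eq_pow_finrank (K := ZMod 2)]
  push_cast [ZMod.card]
  ring

lemma sum_chi_eq (y : Fin n → ZMod 2) :
    ∑ u : W, chi (dotProduct y u) =
      if y ∈ dualSpace W then (Fintype.card W : ℂ) else 0 := by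
  split_ifs with h
  · rw [Finset.sum_congr rfl (fun u _ => ?_), Finset.sum_const, Finset.card_univ,
      nsmul_eq_mul, mul_one]
    rw [dotProduct_comm, h u u.2, chi_zero]
  · rw [mem_dualSpace] at h
    push_neg at h
    obtain ⟨u0, hu0W, hu0⟩ := h
    rw [dotProduct_comm] at hu0
    have h2 : ∀ u : W, chi (dotProduct y
        ((Equiv.addRight (⟨u0, hu0W⟩ : W)) u : Fin n → ZMod 2)) =
        -chi (dotProduct y u) := by
      intro u
      simp only [Equiv.coe_addRight, Submodule.coe_add]
      rw [dotProduct_add, chi_add, chi_of_ne hu0]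
      ring
    have hstep : ∑ u : W, chi (dotProduct y u) =
        -∑ u : W, chi (dotProduct y u) := by
      conv_lhs => rw [← Equiv.sum_comp (Equiv.addRight (⟨u0, hu0W⟩ : W))
        (fun u : W => chi (dotProduct y u))]
      rw [Finset.sum_congr rfl (fun u _ => h2 u), Finset.sum_neg_distrib]
    have h2S : (2 : ℂ) * ∑ u : W, chi (dotProduct y u) = 0 := by
      linear_combination hstep
    have := mul_eq_zero.mp h2S
    simpa using this
end

/-- The single-qubit Hadamard matrix `H = (1/√2)·[[1,1],[1,-1]]`, with rows and columns
indexed by `ZMod 2`. -/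
noncomputable def hadamard : Matrix (ZMod 2) (ZMod 2) ℂ :=
  Matrix.of fun a b => ((Real.sqrt 2 : ℝ) : ℂ)⁻¹ * (-1 : ℂ) ^ (a.val * b.val)

/-- The `n`-fold tensor power `H^{⊗n}`, acting on `(ℂ²)^{⊗n} ≅ ℂ^{2ⁿ}` with computational
basis indexed by `Fin n → ZMod 2`: its `(v,u)` entry is `∏ᵢ H_{vᵢ,uᵢ}`. -/
noncomputable def hadamardPow (n : ℕ) : Matrix (Fin n → ZMod 2) (Fin n → ZMod 2) ℂ :=
  Matrix.of fun v u => ∏ i, hadamard (v i) (u i)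


section Main
open scoped Classical
variable {n : ℕ}

lemma hadamardPow_apply (v w : Fin n → ZMod 2) :
    hadamardPow n v w = (((Real.sqrt 2 : ℝ) : ℂ) ^ n)⁻¹ * chi (dotProduct v w) := by
  have hmul : ∀ a b : ZMod 2, (a * b).val = a.val * b.val := by decide
  show (∏ i, hadamard (v i) (w i)) = _
  rw [dotProduct, chi_sum]
  have : ∀ i, hadamard (v i) (w i) =
      ((Real.sqrt 2 : ℝ) : ℂ)⁻¹ * chi (v i * w i) := by
    intro i
    show ((Real.sqrt 2 : ℝ) : ℂ)⁻¹ * (-1 : ℂ) ^ ((v i).val * (w i).val) = _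
    rw [chi, hmul]
  rw [Finset.prod_congr rfl (fun i _ => this i), Finset.prod_mul_distrib,
    Finset.prod_const, Finset.card_univ, Fintype.card_fin, inv_pow]

lemma sum_subtype_indicator (U : Submodule (ZMod 2) (Fin n → ZMod 2))
    (f : (Fin n → ZMod 2) → ℂ) (t : Fin n → ZMod 2) :
    ∑ w : U, f w * (if (w : Fin n → ZMod 2) = t then (1:ℂ) else 0) =
      if t ∈ U then f t else 0 := by
  split_ifs with h
  · rw [Finset.sum_eq_single_of_mem (⟨t, h⟩ : U) (Finset.mem_univ _)]
    · simp
    · intro b _ hb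
      rw [if_neg (fun hc => hb (Subtype.ext hc)), mul_zero]
  · rw [Finset.sum_eq_zero]
    intro w _
    have hne : (w : Fin n → ZMod 2) ≠ t := fun heq => h (heq ▸ w.2)
    rw [if_neg hne, mul_zero]

lemma euc_sum_apply {ι : Type*} [Fintype ι] (f : ι → EuclideanSpace ℂ (Fin n → ZMod 2))
    (j : Fin n → ZMod 2) : (∑ i, f i) j = ∑ i, f i j :=
  by rw [WithLp.ofLp_sum, Finset.sum_apply]

lemma cosetState_apply (W : Submodule (ZMod 2) (Fin n → ZMod 2)) (x z v : Fin n → ZMod 2) :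
    cosetState W x z v = (((Real.sqrt 2 : ℝ) : ℂ) ^ (Module.finrank (ZMod 2) W))⁻¹ *
      ∑ u : W, chi (dotProduct z u) *
        (if v = x + (u : Fin n → ZMod 2) then (1:ℂ) else 0) := by
  rw [cosetState, WithLp.ofLp_smul, Pi.smul_apply, smul_eq_mul]
  rw [euc_sum_apply]
  congr 1
  refine Finset.sum_congr rfl (fun u _ => ?_)
  rw [WithLp.ofLp_smul, Pi.smul_apply, smul_eq_mul]
  rw [EuclideanSpace.single_apply]
  rfl

end Main

/-- `H^{⊗n} |W_{x,z}⟩ = (-1)^{x·z} |W^⊥_{z,x}⟩`. -/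
theorem hadamardPow_cosetState {n k : ℕ} (W : Submodule (ZMod 2) (Fin n → ZMod 2))
    (hW : Module.finrank (ZMod 2) W = k) (x z : Fin n → ZMod 2) :
    Matrix.toEuclideanLin (hadamardPow n) (cosetState W x z) =
      ((-1 : ℂ) ^ (dotProduct x z).val) • cosetState (dualSpace W) z x := by
  classical
  have hk : k ≤ n := by rw [← hW]; exact finrank_le_n W
  set c : ℂ := ((Real.sqrt 2 : ℝ) : ℂ) with hcdef
  have hc : c ≠ 0 := by
    rw [hcdef]
    exact_mod_cast Real.sqrt_ne_zero'.mpr (by norm_num)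
  have hc2 : c ^ 2 = 2 := by
    rw [hcdef, ← Complex.ofReal_pow, Real.sq_sqrt (by norm_num)]
    norm_num
  have hzz : ∀ f : Fin n → ZMod 2, f + f = 0 := fun f => by
    rw [← two_smul (ZMod 2) f, show (2 : ZMod 2) = 0 by decide, zero_smul]
  ext v
  -- LHS component
  have hLHS : Matrix.toEuclideanLin (hadamardPow n) (cosetState W x z) v =
      (c ^ k)⁻¹ * ∑ u : W, chi (dotProduct z u) *
        hadamardPow n v (x + (u : Fin n → ZMod 2)) := by
    rw [Matrix.toEuclideanLin_apply]
    show Matrix.mulVec _ _ v = _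
    rw [Matrix.mulVec, dotProduct]
    have hψ : ∀ u', (WithLp.equiv 2 ((Fin n → ZMod 2) → ℂ)) (cosetState W x z) u' =
        (c ^ k)⁻¹ * ∑ u : W, chi (dotProduct z u) *
          (if u' = x + (u : Fin n → ZMod 2) then (1:ℂ) else 0) := by
      intro u'
      show cosetState W x z u' = _
      rw [cosetState_apply, hW]
    calc ∑ u', hadamardPow n v u' *
          (WithLp.equiv 2 ((Fin n → ZMod 2) → ℂ)) (cosetState W x z) u'
        = ∑ u', (c ^ k)⁻¹ * ∑ u : W, chi (dotProduct z u) *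
            (hadamardPow n v u' * (if u' = x + (u : Fin n → ZMod 2) then (1:ℂ) else 0)) := by
          refine Finset.sum_congr rfl (fun u' _ => ?_)
          rw [hψ u', Finset.mul_sum, Finset.mul_sum, Finset.mul_sum]
          exact Finset.sum_congr rfl (fun u _ => by ring)
      _ = (c ^ k)⁻¹ * ∑ u : W, ∑ u', chi (dotProduct z u) *
            (hadamardPow n v u' * (if u' = x + (u : Fin n → ZMod 2) then (1:ℂ) else 0)) := by
          rw [← Finset.mul_sum, Finset.sum_comm]
      _ = _ := by
          congr 1
          refine Finset.sum_congr rfl (fun u _ => ?_)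
          rw [← Finset.mul_sum]
          congr 1
          rw [Finset.sum_eq_single_of_mem (x + (u : Fin n → ZMod 2)) (Finset.mem_univ _)]
          · simp
          · intro b _ hb
            rw [if_neg hb, mul_zero]
  rw [hLHS]
  -- simplify LHS sum
  have hsum : ∑ u : W, chi (dotProduct z u) *
      hadamardPow n v (x + (u : Fin n → ZMod 2)) =
      (c ^ n)⁻¹ * chi (dotProduct v x) *
        ∑ u : W, chi (dotProduct (z + v) u) := by
    rw [Finset.mul_sum]
    refine Finset.sum_congr rfl (fun u _ => ?_)
    rw [hadamardPow_apply, dotProduct_add, add_dotProduct, chi_add, chi_add]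
    ring
  rw [hsum, sum_chi_eq, card_submodule, hW]
  -- RHS component
  have hRHS : (((-1 : ℂ) ^ (dotProduct x z).val) • cosetState (dualSpace W) z x) v =
      chi (dotProduct x z) * ((c ^ (n - k))⁻¹ *
        (if z + v ∈ dualSpace W then chi (dotProduct x (z + v)) else 0)) := by
    show ((-1 : ℂ) ^ (dotProduct x z).val) * cosetState (dualSpace W) z x v = _
    rw [cosetState_apply, finrank_dualSpace, hW]
    show chi (dotProduct x z) * _ = _
    congr 1
    congr 1
    calc ∑ w : dualSpace W, chi (dotProduct x w) *
          (if v = z + (w : Fin n → ZMod 2) then (1:ℂ) else 0)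
        = ∑ w : dualSpace W, chi (dotProduct x w) *
            (if (w : Fin n → ZMod 2) = z + v then (1:ℂ) else 0) := by
          refine Finset.sum_congr rfl (fun w _ => ?_)
          congr 1
          congr 1
          simp only [eq_iff_iff]
          constructor
          · intro h; rw [h, ← add_assoc, hzz z, zero_add]
          · intro h; rw [h, ← add_assoc, hzz z, zero_add]
      _ = _ := sum_subtype_indicator (dualSpace W)
            (fun w => chi (dotProduct x w)) (z + v)
  rw [hRHS]
  -- final scalar identity
  by_cases h : z + v ∈ dualSpace W
  · rw [if_pos h, if_pos h]
    rw [dotProduct_add, chi_add]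
    have hxz : chi (dotProduct x z) * chi (dotProduct x z) = 1 := chi_sq _
    have hvx : chi (dotProduct v x) = chi (dotProduct x v) := by
      rw [dotProduct_comm]
    have hpow : (c ^ k)⁻¹ * ((c ^ n)⁻¹ * (2:ℂ) ^ k) = (c ^ (n - k))⁻¹ := by
      have h2 : (2:ℂ) ^ k = c ^ (2 * k) := by rw [pow_mul, hc2]
      have hn : c ^ n = c ^ (n - k) * c ^ k := by rw [← pow_add]; congr 1; omega
      have h3 : c ^ (2 * k) = c ^ k * c ^ k := by rw [two_mul, pow_add]
      rw [h2, hn, h3, mul_inv]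
      field_simp
    calc (c ^ k)⁻¹ * ((c ^ n)⁻¹ * chi (dotProduct v x) * ((2:ℂ) ^ k)) =
        ((c ^ k)⁻¹ * ((c ^ n)⁻¹ * (2:ℂ) ^ k)) * chi (dotProduct x v) := by
          rw [hvx]; ring
      _ = (c ^ (n - k))⁻¹ * chi (dotProduct x v) := by rw [hpow]
      _ = chi (dotProduct x z) * ((c ^ (n - k))⁻¹ *
            (chi (dotProduct x z) * chi (dotProduct x v))) := by
          calc (c ^ (n - k))⁻¹ * chi (dotProduct x v)
              = (chi (dotProduct x z) * chi (dotProduct x z)) *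
                  ((c ^ (n - k))⁻¹ * chi (dotProduct x v)) := by rw [hxz, one_mul]
            _ = _ := by ring
  · rw [if_neg h, if_neg h]
    ring
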